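/- Let X be a graph as in the context, fix a vertex x₀, and let m ≥ 5 be an integer. Then (N_m(x₀) − N_{m−2}(x₀)) − (N_{m−2}(x₀) − N_{m−4}(x₀)) = (c_m(x₀) − c_{m−2}(x₀)) − (deg(x₀)−1)·(c_{m−2}(x₀) − c_{m−4}(x₀)) + (Δ_X c_{m−2})(x₀). -/
import Mathlib


/-- A graph in the sense of Serre: an edge set with origin/terminus maps and a
fixed-point-free involution `bar` satisfying `o e = t (bar e)`.
Loops and multiple edges are allowed. -/
structure SerreGraph where
  V : Type
  E : Type
  o : E → V
  t : E → V
  bar : E → E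
  bar_ne : ∀ e, bar e ≠ e
  bar_bar : ∀ e, bar (bar e) = e
  o_bar : ∀ e, o e = t (bar e)

namespace SerreGraph

variable (X : SerreGraph)

/-- The set of edges emanating from `x`. -/
def edgesAt (x : X.V) : Set X.E := {e | X.o e = x}

/-- The degree of a vertex. -/
noncomputable def deg (x : X.V) : ℕ := Nat.card (X.edgesAt x)

/-- A sequence of `m` edges is a path when consecutive edges are composable. -/
def IsPath {m : ℕ} (p : Fin m → X.E) : Prop :=
  ∀ (i : ℕ) (h : i + 1 < m), X.t (p ⟨i, by omega⟩) = X.o (p ⟨i + 1, h⟩)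

/-- No backtracking: no edge is followed by its reversal. -/
def NoBacktrack {m : ℕ} (p : Fin m → X.E) : Prop :=
  ∀ (i : ℕ) (h : i + 1 < m), p ⟨i + 1, h⟩ ≠ X.bar (p ⟨i, by omega⟩)

/-- A geodesic loop at `x`: a closed path starting and ending at `x` with no
backtracking. -/
def IsGeodesicLoopAt {m : ℕ} (x : X.V) (p : Fin m → X.E) : Prop :=
  X.IsPath p ∧ X.NoBacktrack p ∧
    ∀ (h : 0 < m), X.o (p ⟨0, h⟩) = x ∧ X.t (p ⟨m - 1, by omega⟩) = x

/-- A path has a tail when its last edge is the reversal of its first edge. -/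
def HasTail {m : ℕ} (p : Fin m → X.E) : Prop :=
  ∃ (h : 0 < m), p ⟨m - 1, by omega⟩ = X.bar (p ⟨0, h⟩)

/-- `c m x` is the number of geodesic loops of length `m` starting at `x`. -/
noncomputable def c (m : ℕ) (x : X.V) : ℕ :=
  Nat.card {p : Fin m → X.E // X.IsGeodesicLoopAt x p}

/-- `N m x` is the number of closed geodesics of length `m` starting at `x`,
i.e. geodesic loops with no tail. -/
noncomputable def N (m : ℕ) (x : X.V) : ℕ :=
  Nat.card {p : Fin m → X.E // X.IsGeodesicLoopAt x p ∧ ¬ X.HasTail p}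

/-- The formal combinatorial Laplacian applied to a function on vertices:
`(Δ f)(x) = deg(x)·f(x) − Σ_{e ∈ E_x} f(t(e))`. -/
noncomputable def lap (f : X.V → ℤ) (x : X.V) : ℤ :=
  (X.deg x : ℤ) * f x - ∑ᶠ e ∈ X.edgesAt x, f (X.t e)

/-- Connectedness: any two vertices are joined by a path. -/
def Connected : Prop :=
  ∀ x y : X.V, x = y ∨ ∃ (m : ℕ) (p : Fin m → X.E) (h : 0 < m),
    X.IsPath p ∧ X.o (p ⟨0, h⟩) = x ∧ X.t (p ⟨m - 1, by omega⟩) = y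

end SerreGraph

namespace SerreGraph

variable (X : SerreGraph)

-- generic counting lemmas
theorem card_part {α : Type*} [Finite α] (P : α → Prop) :
    Nat.card α = Nat.card {a // P a} + Nat.card {a // ¬ P a} := by
  classical
  rw [← Nat.card_sum]
  exact Nat.card_congr (Equiv.sumCompl P).symm

theorem card_split {α : Type*} (G Q : α → Prop) [Finite {a // G a}] :
    Nat.card {a // G a} = Nat.card {a // G a ∧ Q a} + Nat.card {a // G a ∧ ¬ Q a} := by
  rw [card_part (fun a : {a // G a} => Q a.1)]
  congr 1
  · exact Nat.card_congr (Equiv.subtypeSubtypeEquivSubtypeInter G Q)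
  · exact Nat.card_congr (Equiv.subtypeSubtypeEquivSubtypeInter G (fun a => ¬ Q a))

theorem card_reindex {α : Type*} (G G' : α → Prop) (h : ∀ a, G a ↔ G' a) :
    Nat.card {a // G a} = Nat.card {a // G' a} :=
  Nat.card_congr (Equiv.subtypeEquivRight h)

theorem card_part2 {α : Type*} (G P Q : α → Prop) [Finite {a // G a}] :
    Nat.card {a // G a} = Nat.card {a // G a ∧ (P a ∧ Q a)}
      + Nat.card {a // G a ∧ (P a ∧ ¬ Q a)}
      + Nat.card {a // G a ∧ (¬ P a ∧ Q a)}
      + Nat.card {a // G a ∧ (¬ P a ∧ ¬ Q a)} := by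
  have h1 : Finite {a // G a ∧ P a} := by
    exact Finite.of_injective (fun z => (⟨z.1, z.2.1⟩ : {a // G a}))
      (fun z w h => by simpa [Subtype.ext_iff] using h)
  have h2 : Finite {a // G a ∧ ¬ P a} := by
    exact Finite.of_injective (fun z => (⟨z.1, z.2.1⟩ : {a // G a}))
      (fun z w h => by simpa [Subtype.ext_iff] using h)
  rw [SerreGraph.card_split G P, card_split (fun a => G a ∧ P a) Q,
    card_split (fun a => G a ∧ ¬ P a) Q]
  rw [card_reindex (fun a => (G a ∧ P a) ∧ Q a) (fun a => G a ∧ (P a ∧ Q a)) (by tauto),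
    card_reindex (fun a => (G a ∧ P a) ∧ ¬ Q a) (fun a => G a ∧ (P a ∧ ¬ Q a)) (by tauto),
    card_reindex (fun a => (G a ∧ ¬ P a) ∧ Q a) (fun a => G a ∧ (¬ P a ∧ Q a)) (by tauto),
    card_reindex (fun a => (G a ∧ ¬ P a) ∧ ¬ Q a) (fun a => G a ∧ (¬ P a ∧ ¬ Q a)) (by tauto)]
  ring


theorem finite_paths (hfin : ∀ x : X.V, (X.edgesAt x).Finite) :
    ∀ (n : ℕ) (x : X.V),
      {p : Fin n → X.E | X.IsPath p ∧ ∀ h : 0 < n, X.o (p ⟨0, h⟩) = x}.Finite := by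
  intro n
  induction n with
  | zero =>
    intro x
    apply Set.Subsingleton.finite
    intro p _ q _
    funext i
    exact absurd i.2 (by omega)
  | succ n ih =>
    intro x
    have hsub : {p : Fin (n+1) → X.E | X.IsPath p ∧ ∀ h : 0 < n+1, X.o (p ⟨0, h⟩) = x} ⊆
        ⋃ e ∈ X.edgesAt x,
          (fun (q : Fin n → X.E) (i : Fin (n+1)) =>
            if h : i.1 = 0 then e else q ⟨i.1 - 1, by omega⟩) ''
          {q : Fin n → X.E | X.IsPath q ∧ ∀ h : 0 < n, X.o (q ⟨0, h⟩) = X.t e} := by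
      intro p hp
      obtain ⟨hpath, hstart⟩ := hp
      apply Set.mem_biUnion (show p ⟨0, by omega⟩ ∈ X.edgesAt x from hstart (by omega))
      refine ⟨fun i => p ⟨i.1 + 1, by omega⟩, ⟨?_, ?_⟩, ?_⟩
      · intro i h
        exact hpath (i+1) (by omega)
      · intro h
        exact (hpath 0 (by omega)).symm
      · funext i
        beta_reduce
        rcases Nat.eq_zero_or_pos i.1 with h | h
        · rw [dif_pos h]
          congr 1
          apply Fin.ext
          simp only [Fin.val_mk]
          omega
        · rw [dif_neg (by omega)]
          congr 1
          apply Fin.ext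
          simp only [Fin.val_mk]
          omega
    exact Set.Finite.subset ((hfin x).biUnion (fun e _ => ((ih (X.t e)).image _))) hsub

theorem finite_loops (hfin : ∀ x : X.V, (X.edgesAt x).Finite) {n : ℕ} {y : X.V}
    (P : (Fin n → X.E) → Prop) (hP : ∀ q, P q → X.IsGeodesicLoopAt y q) :
    Finite {q : Fin n → X.E // P q} := by
  have hsub : {q : Fin n → X.E | P q} ⊆
      {p : Fin n → X.E | X.IsPath p ∧ ∀ h : 0 < n, X.o (p ⟨0, h⟩) = y} :=
    fun q hq => ⟨(hP q hq).1, fun h => ((hP q hq).2.2 h).1⟩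
  exact ((X.finite_paths hfin n y).subset hsub).to_subtype

theorem card_sigma' {ι : Type*} [Fintype ι] (g : ι → Type*) [∀ i, Finite (g i)] :
    Nat.card (Σ i, g i) = ∑ i, Nat.card (g i) := by
  letI : ∀ i, Fintype (g i) := fun i => Fintype.ofFinite (g i)
  simp [Nat.card_eq_fintype_card, Fintype.card_sigma]

theorem card_pairs {n : ℕ} (x : X.V) (P : X.E × (Fin n → X.E) → Prop)
    (hx : (X.edgesAt x).Finite) (hP : ∀ e, Finite {q : Fin n → X.E // P (e, q)}) :
    Nat.card {z : X.E × (Fin n → X.E) // z.1 ∈ X.edgesAt x ∧ P z}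
      = ∑ e ∈ hx.toFinset, Nat.card {q : Fin n → X.E // P (e, q)} := by
  letI := hx.fintype
  have e1 : {z : X.E × (Fin n → X.E) // z.1 ∈ X.edgesAt x ∧ P z}
      ≃ Σ e : X.edgesAt x, {q : Fin n → X.E // P (e.1, q)} :=
    { toFun := fun z => ⟨⟨z.1.1, z.2.1⟩, ⟨z.1.2, z.2.2⟩⟩
      invFun := fun w => ⟨(w.1.1, w.2.1), w.1.2, w.2.2⟩
      left_inv := fun z => rfl
      right_inv := fun w => rfl }
  rw [Nat.card_congr e1, card_sigma']
  rw [← Finset.sum_coe_sort hx.toFinset (fun e => Nat.card {q : Fin n → X.E // P (e, q)})]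
  exact Fintype.sum_equiv
    ((Equiv.subtypeEquivRight (fun e => hx.mem_toFinset)).symm) _ _ (fun i => rfl)


theorem fcongr {α : Type*} {m : ℕ} (f : Fin m → α) (a b : ℕ) (ha : a < m) (hb : b < m)
    (h : a = b) : f ⟨a, ha⟩ = f ⟨b, hb⟩ := by subst h; rfl

theorem o_bar' (e : X.E) : X.o (X.bar e) = X.t e := by rw [X.o_bar (X.bar e), X.bar_bar]

theorem t_bar (e : X.E) : X.t (X.bar e) = X.o e := (X.o_bar e).symm

theorem bar_inj {a b : X.E} (h : X.bar a = X.bar b) : a = b := by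
  rw [← X.bar_bar a, h, X.bar_bar]

theorem card_tailed (x : X.V) (j : ℕ) :
    Nat.card {p : Fin (j+3) → X.E // X.IsGeodesicLoopAt x p ∧ X.HasTail p}
      = Nat.card {z : X.E × (Fin (j+1) → X.E) // z.1 ∈ X.edgesAt x ∧
          (X.IsGeodesicLoopAt (X.t z.1) z.2 ∧ z.2 ⟨0, by omega⟩ ≠ X.bar z.1 ∧
            z.2 ⟨j, by omega⟩ ≠ z.1)} := by
  apply Nat.card_congr
  have hmem : ∀ p : Fin (j+3) → X.E, (X.IsGeodesicLoopAt x p ∧ X.HasTail p) →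
      ((p ⟨0, by omega⟩, fun i : Fin (j+1) => p ⟨i.1+1, by omega⟩).1 ∈ X.edgesAt x ∧
        (X.IsGeodesicLoopAt (X.t (p ⟨0, by omega⟩, fun i : Fin (j+1) => p ⟨i.1+1, by omega⟩).1)
            (p ⟨0, by omega⟩, fun i : Fin (j+1) => p ⟨i.1+1, by omega⟩).2 ∧
          (p ⟨0, by omega⟩, fun i : Fin (j+1) => p ⟨i.1+1, by omega⟩).2 ⟨0, by omega⟩
              ≠ X.bar (p ⟨0, by omega⟩, fun i : Fin (j+1) => p ⟨i.1+1, by omega⟩).1 ∧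
          (p ⟨0, by omega⟩, fun i : Fin (j+1) => p ⟨i.1+1, by omega⟩).2 ⟨j, by omega⟩
              ≠ (p ⟨0, by omega⟩, fun i : Fin (j+1) => p ⟨i.1+1, by omega⟩).1)) := by
    intro p hp
    obtain ⟨⟨hpath, hnb, hloop⟩, ht0, htail⟩ := hp
    obtain ⟨h0, hend⟩ := hloop (by omega)
    have htail' : ∀ (a : ℕ) (ha : a < j+3), a = j+2 → p ⟨a, ha⟩ = X.bar (p ⟨0, by omega⟩) := by
      intro a ha h; subst h; exact htail
    refine ⟨h0, ⟨?_, ?_, ?_⟩, ?_, ?_⟩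
    · intro i h
      exact hpath (i+1) (by omega)
    · intro i h
      exact hnb (i+1) (by omega)
    · intro h
      constructor
      · exact (hpath 0 (by omega)).symm
      · show X.t (p ⟨j+1-1+1, by omega⟩) = X.t (p ⟨0, by omega⟩)
        have h1 : X.t (p ⟨j+1-1+1, by omega⟩) = X.o (p ⟨j+1-1+1+1, by omega⟩) :=
          hpath (j+1-1+1) (by omega)
        rw [h1, htail' (j+1-1+1+1) (by omega) (by omega), X.o_bar']
    · exact hnb 0 (by omega)
    · intro hc
      exact hnb (j+1) (by omega)
        ((htail' (j+1+1) (by omega) (by omega)).trans (congrArg X.bar hc.symm))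
  refine Equiv.ofBijective
    (fun p => ⟨(p.1 ⟨0, by omega⟩, fun i : Fin (j+1) => p.1 ⟨i.1+1, by omega⟩),
      hmem p.1 p.2⟩) ⟨?_, ?_⟩
  · intro p p' h
    have hval := congrArg Subtype.val h
    have h1 : p.1 ⟨0, by omega⟩ = p'.1 ⟨0, by omega⟩ := congrArg Prod.fst hval
    have h2 := congrArg Prod.snd hval
    apply Subtype.ext
    funext i
    rcases i with ⟨i, hi⟩
    rcases Nat.lt_or_ge i (j+2) with hlt | hge
    · rcases Nat.eq_zero_or_pos i with rfl | hpos
      · exact h1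
      · have h3 : p.1 ⟨i-1+1, by omega⟩ = p'.1 ⟨i-1+1, by omega⟩ :=
          congrFun h2 ⟨i - 1, by omega⟩
        exact ((fcongr p.1 i (i-1+1) hi (by omega) (by omega)).trans h3).trans
          (fcongr p'.1 (i-1+1) i (by omega) hi (by omega))
    · have hi2 : i = j+2 := by omega
      subst hi2
      obtain ⟨_, ht⟩ := p.2.2
      obtain ⟨_, ht'⟩ := p'.2.2
      calc p.1 ⟨j+2, hi⟩ = X.bar (p.1 ⟨0, by omega⟩) := ht
        _ = X.bar (p'.1 ⟨0, by omega⟩) := congrArg X.bar h1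
        _ = p'.1 ⟨j+2, hi⟩ := ht'.symm
  · rintro ⟨⟨e, q⟩, he, ⟨qpath, qnb, qloop⟩, hq0, hqlast⟩
    obtain ⟨hqs, hqe⟩ := qloop (by omega)
    set p : Fin (j+3) → X.E := fun i =>
      if h0 : i.1 = 0 then e else if hl : i.1 = j+2 then X.bar e
      else q ⟨i.1 - 1, by omega⟩ with hp
    have hp0 : ∀ (a : ℕ) (ha : a < j+3), a = 0 → p ⟨a, ha⟩ = e := by
      intro a ha h; simp only [hp]; rw [dif_pos h]
    have hpl : ∀ (a : ℕ) (ha : a < j+3), a = j+2 → p ⟨a, ha⟩ = X.bar e := by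
      intro a ha h; simp only [hp]; rw [dif_neg (by omega), dif_pos h]
    have hpm : ∀ (a : ℕ) (ha : a < j+3) (b : ℕ) (hb : b < j+1), 0 < a → a < j+2 → b = a - 1 →
        p ⟨a, ha⟩ = q ⟨b, hb⟩ := by
      intro a ha b hb h1 h2 h3
      simp only [hp]
      rw [dif_neg (by omega), dif_neg (by omega)]
      exact fcongr q (a-1) b (by omega) hb (by omega)
    have hqpath : ∀ (a b : ℕ) (ha : a < j+1) (hb : b < j+1), b = a + 1 →
        X.t (q ⟨a, ha⟩) = X.o (q ⟨b, hb⟩) := by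
      intro a b ha hb h; subst h; exact qpath a hb
    have hqnb : ∀ (a b : ℕ) (ha : a < j+1) (hb : b < j+1), b = a + 1 →
        q ⟨b, hb⟩ ≠ X.bar (q ⟨a, ha⟩) := by
      intro a b ha hb h; subst h; exact qnb a hb
    refine ⟨⟨p, ⟨?_, ?_, ?_⟩, by omega, ?_⟩, ?_⟩
    · -- IsPath p
      intro i h
      rcases Nat.eq_zero_or_pos i with rfl | hpos
      · rw [hp0 0 (by omega) rfl, hpm 1 (by omega) 0 (by omega) (by omega) (by omega) (by omega)]
        exact hqs.symm
      · rcases Nat.lt_or_ge i (j+1) with hlt | hge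
        · rw [hpm i (by omega) (i-1) (by omega) (by omega) (by omega) (by omega),
            hpm (i+1) (by omega) i (by omega) (by omega) (by omega) (by omega)]
          exact hqpath (i-1) i (by omega) (by omega) (by omega)
        · have : i = j+1 := by omega
          subst this
          rw [hpm (j+1) (by omega) j (by omega) (by omega) (by omega) (by omega),
            hpl (j+1+1) (by omega) (by omega), X.o_bar']
          exact hqe
    · -- NoBacktrack p
      intro i h
      rcases Nat.eq_zero_or_pos i with rfl | hpos
      · rw [hp0 0 (by omega) rfl, hpm 1 (by omega) 0 (by omega) (by omega) (by omega) (by omega)]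
        exact hq0
      · rcases Nat.lt_or_ge i (j+1) with hlt | hge
        · rw [hpm i (by omega) (i-1) (by omega) (by omega) (by omega) (by omega),
            hpm (i+1) (by omega) i (by omega) (by omega) (by omega) (by omega)]
          exact hqnb (i-1) i (by omega) (by omega) (by omega)
        · have : i = j+1 := by omega
          subst this
          rw [hpl (j+1+1) (by omega) (by omega),
            hpm (j+1) (by omega) j (by omega) (by omega) (by omega) (by omega)]
          intro hc
          exact hqlast (X.bar_inj hc).symm
    · -- loop at x
      intro h
      constructor
      · rw [hp0 0 (by omega) rfl]; exact he
      · rw [hpl (j+3-1) (by omega) (by omega), X.t_bar]; exact he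
    · -- tail
      rw [hpl (j+3-1) (by omega) (by omega), hp0 0 (by omega) rfl]
    · -- image equals z
      apply Subtype.ext
      refine Prod.ext ?_ ?_
      · exact hp0 0 (by omega) rfl
      · funext i
        exact hpm (i.1+1) (by omega) i.1 i.2 (by omega) (by omega) (by omega)
  

theorem card_rot (x : X.V) (j : ℕ) :
    Nat.card {z : X.E × (Fin (j+2) → X.E) // z.1 ∈ X.edgesAt x ∧
        (X.IsGeodesicLoopAt (X.t z.1) z.2 ∧ z.2 ⟨0, by omega⟩ ≠ X.bar z.1 ∧
          z.2 ⟨j+1, by omega⟩ = z.1)}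
      = Nat.card {p : Fin (j+2) → X.E // X.IsGeodesicLoopAt x p ∧ ¬ X.HasTail p} := by
  apply Nat.card_congr
  set F0 : X.E → (Fin (j+2) → X.E) → (Fin (j+2) → X.E) :=
    fun e q i => if h : i.1 = 0 then e else q ⟨i.1 - 1, by omega⟩ with hF0
  have hC0 : ∀ (e : X.E) (q : Fin (j+2) → X.E) (a : ℕ) (ha : a < j+2), a = 0 →
      F0 e q ⟨a, ha⟩ = e := by
    intro e q a ha h; simp only [hF0]; rw [dif_pos h]
  have hCm : ∀ (e : X.E) (q : Fin (j+2) → X.E) (a : ℕ) (ha : a < j+2) (b : ℕ) (hb : b < j+2),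
      0 < a → b = a - 1 → F0 e q ⟨a, ha⟩ = q ⟨b, hb⟩ := by
    intro e q a ha b hb h1 h2; simp only [hF0]; rw [dif_neg (by omega)]
    exact fcongr q (a-1) b (by omega) hb (by omega)
  have hmem : ∀ (e : X.E) (q : Fin (j+2) → X.E),
      (e ∈ X.edgesAt x ∧ (X.IsGeodesicLoopAt (X.t e) q ∧ q ⟨0, by omega⟩ ≠ X.bar e ∧
        q ⟨j+1, by omega⟩ = e)) →
      X.IsGeodesicLoopAt x (F0 e q) ∧ ¬ X.HasTail (F0 e q) := by
    rintro e q ⟨he, ⟨qpath, qnb, qloop⟩, hq0, hql⟩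
    obtain ⟨hqs, -⟩ := qloop (by omega)
    refine ⟨⟨?_, ?_, ?_⟩, ?_⟩
    · intro i h
      rcases Nat.eq_zero_or_pos i with rfl | hpos
      · rw [hC0 e q 0 (by omega) rfl, hCm e q 1 (by omega) 0 (by omega) (by omega) (by omega)]
        exact hqs.symm
      · rw [hCm e q i (by omega) (i-1) (by omega) hpos (by omega),
          hCm e q (i+1) (by omega) i (by omega) (by omega) (by omega)]
        exact (qpath (i-1) (by omega)).trans
          (congrArg X.o (fcongr q (i-1+1) i (by omega) (by omega) (by omega)))
    · intro i h
      rcases Nat.eq_zero_or_pos i with rfl | hpos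
      · rw [hC0 e q 0 (by omega) rfl, hCm e q 1 (by omega) 0 (by omega) (by omega) (by omega)]
        exact hq0
      · rw [hCm e q i (by omega) (i-1) (by omega) hpos (by omega),
          hCm e q (i+1) (by omega) i (by omega) (by omega) (by omega)]
        intro hc
        exact qnb (i-1) (by omega)
          ((fcongr q (i-1+1) i (by omega) (by omega) (by omega)).trans hc)
    · intro h
      refine ⟨?_, ?_⟩
      · rw [hC0 e q 0 (by omega) rfl]; exact he
      · rw [hCm e q (j+2-1) (by omega) j (by omega) (by omega) (by omega)]
        have h3 := qpath j (show j+1 < j+2 by omega)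
        rw [h3, hql]
        exact he
    · rintro ⟨ht0, htail⟩
      rw [hCm e q (j+2-1) (by omega) j (by omega) (by omega) (by omega),
        hC0 e q 0 (by omega) rfl] at htail
      apply qnb j (show j+1 < j+2 by omega)
      rw [hql, htail, X.bar_bar]
  refine Equiv.ofBijective
    (fun z => ⟨F0 z.1.1 z.1.2, hmem z.1.1 z.1.2 z.2⟩) ⟨?_, ?_⟩
  · rintro ⟨⟨e, q⟩, he, hgl, hq0, hql⟩ ⟨⟨e', q'⟩, he', hgl', hq0', hql'⟩ h
    dsimp only at he hgl hq0 hql he' hgl' hq0' hql'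
    have hval : F0 e q = F0 e' q' := congrArg Subtype.val h
    have he2 : e = e' := (hC0 e q 0 (by omega) rfl).symm.trans
      ((congrFun hval ⟨0, by omega⟩).trans (hC0 e' q' 0 (by omega) rfl))
    have hq2 : q = q' := by
      funext i
      rcases Nat.lt_or_ge i.1 (j+1) with hlt | hge
      · have h5 := congrFun hval ⟨i.1+1, by omega⟩
        have l1 := hCm e q (i.1+1) (by omega) i.1 (by omega) (by omega) (by omega)
        have l2 := hCm e' q' (i.1+1) (by omega) i.1 (by omega) (by omega) (by omega)
        exact (l1.symm.trans h5).trans l2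
      · have hi : i.1 = j+1 := by omega
        rw [show i = (⟨j+1, by omega⟩ : Fin (j+2)) from Fin.ext hi, hql, hql']
        exact he2
    exact Subtype.ext (Prod.ext he2 hq2)
  · rintro ⟨p, ⟨ppath, pnb, ploop⟩, hnt⟩
    obtain ⟨hps, hpe⟩ := ploop (by omega)
    have htail' : ∀ hh, p ⟨j+1, hh⟩ ≠ X.bar (p ⟨0, by omega⟩) := by
      intro hh hc
      exact hnt ⟨by omega, hc⟩
    set q1 : Fin (j+2) → X.E :=
      fun i => if h : i.1 = j+1 then p ⟨0, by omega⟩ else p ⟨i.1+1, by omega⟩ with hq1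
    have hD0 : ∀ (a : ℕ) (ha : a < j+2) (hl : a < j+1), q1 ⟨a, ha⟩ = p ⟨a+1, by omega⟩ := by
      intro a ha h; simp only [hq1]; rw [dif_neg (by omega)]
    have hDl : ∀ (a : ℕ) (ha : a < j+2), a = j+1 → q1 ⟨a, ha⟩ = p ⟨0, by omega⟩ := by
      intro a ha h; simp only [hq1]; rw [dif_pos h]
    refine ⟨⟨(p ⟨0, by omega⟩, q1), hps, ⟨?_, ?_, ?_⟩, ?_, ?_⟩, ?_⟩
    · intro i h
      dsimp only
      rcases Nat.lt_or_ge (i+1) (j+1) with hlt | hge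
      · rw [hD0 i (by omega) (by omega), hD0 (i+1) (by omega) (by omega)]
        exact ppath (i+1) (by omega)
      · have hij : i = j := by omega
        subst hij
        rw [hD0 i (by omega) (by omega), hDl (i+1) (by omega) (by omega), hps]
        exact hpe
    · intro i h
      dsimp only
      rcases Nat.lt_or_ge (i+1) (j+1) with hlt | hge
      · rw [hD0 i (by omega) (by omega), hD0 (i+1) (by omega) (by omega)]
        exact pnb (i+1) (by omega)
      · have hij : i = j := by omega
        subst hij
        rw [hDl (i+1) (by omega) (by omega), hD0 i (by omega) (by omega)]
        intro hc
        apply htail' (by omega)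
        rw [hc, X.bar_bar]
    · intro h
      refine ⟨?_, ?_⟩
      · dsimp only
        rw [hD0 0 (by omega) (by omega)]
        exact (ppath 0 (by omega)).symm
      · dsimp only
        rw [hDl (j+2-1) (by omega) (by omega)]
    · dsimp only
      rw [hD0 0 (by omega) (by omega)]
      exact pnb 0 (by omega)
    · exact hDl (j+1) (by omega) rfl
    · apply Subtype.ext
      funext i
      rcases Nat.eq_zero_or_pos i.1 with h | h
      · exact (hC0 (p ⟨0, by omega⟩) q1 i.1 i.2 h).trans
          (fcongr p 0 i.1 (by omega) i.2 h.symm)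
      · exact ((hCm (p ⟨0, by omega⟩) q1 i.1 i.2 (i.1-1) (by omega) h rfl).trans
          (hD0 (i.1-1) (by omega) (by omega))).trans
          (fcongr p (i.1-1+1) i.1 (by omega) i.2 (by omega))


theorem card_rev (e : X.E) (j : ℕ) :
    Nat.card {q : Fin (j+1) → X.E // X.IsGeodesicLoopAt (X.t e) q ∧
        (q ⟨0, by omega⟩ = X.bar e ∧ q ⟨j, by omega⟩ ≠ e)}
      = Nat.card {q : Fin (j+1) → X.E // X.IsGeodesicLoopAt (X.t e) q ∧
          (q ⟨0, by omega⟩ ≠ X.bar e ∧ q ⟨j, by omega⟩ = e)} := by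
  apply Nat.card_congr
  have hrev : ∀ q : Fin (j+1) → X.E, X.IsGeodesicLoopAt (X.t e) q →
      X.IsGeodesicLoopAt (X.t e) (fun i : Fin (j+1) => X.bar (q ⟨j - i.1, by omega⟩)) := by
    rintro q ⟨qpath, qnb, qloop⟩
    obtain ⟨hqs, hqe⟩ := qloop (by omega)
    refine ⟨?_, ?_, ?_⟩
    · intro i h
      beta_reduce
      rw [X.t_bar, X.o_bar']
      exact ((qpath (j-(i+1)) (by omega)).trans
        (congrArg X.o (fcongr q (j-(i+1)+1) (j-i) (by omega) (by omega) (by omega)))).symm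
    · intro i h
      beta_reduce
      rw [X.bar_bar]
      intro hc
      exact qnb (j-(i+1)) (by omega)
        ((fcongr q (j-(i+1)+1) (j-i) (by omega) (by omega) (by omega)).trans hc.symm)
    · intro h
      refine ⟨?_, ?_⟩
      · beta_reduce
        rw [X.o_bar']
        exact hqe
      · beta_reduce
        rw [X.t_bar]
        exact (congrArg X.o (fcongr q (j-(j+1-1)) 0 (by omega) (by omega) (by omega))).trans hqs
  refine Equiv.ofBijective (fun q => ⟨fun i : Fin (j+1) => X.bar (q.1 ⟨j - i.1, by omega⟩),
    hrev q.1 q.2.1, ?_, ?_⟩) ⟨?_, ?_⟩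
  · intro hc
    exact q.2.2.2 (X.bar_inj ((congrArg X.bar
      (fcongr q.1 j (j-0) (by omega) (by omega) (by omega))).symm.trans hc))
  · exact (congrArg X.bar (fcongr q.1 (j-(j+1-1)) 0 (by omega) (by omega) (by omega))).trans
      ((congrArg X.bar q.2.2.1).trans (X.bar_bar e))
  · intro q q' h
    have hval := congrArg Subtype.val h
    apply Subtype.ext
    funext i
    have h2 := congrFun hval ⟨j - i.1, by omega⟩
    dsimp only at h2
    have h3 := X.bar_inj h2
    exact ((fcongr q.1 i.1 (j-(j-i.1)) i.2 (by omega) (by omega)).trans h3).trans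
      (fcongr q'.1 (j-(j-i.1)) i.1 (by omega) i.2 (by omega))
  · rintro ⟨r, hr, hr0, hrl⟩
    refine ⟨⟨fun i : Fin (j+1) => X.bar (r ⟨j - i.1, by omega⟩), hrev r hr, ?_, ?_⟩, ?_⟩
    · dsimp only
      exact congrArg X.bar hrl
    · dsimp only
      intro hc
      apply hr0
      have h4 : r ⟨j-j, by omega⟩ = X.bar e := by
        rw [← X.bar_bar (r ⟨j-j, by omega⟩), hc]
      exact (fcongr r 0 (j-j) (by omega) (by omega) (by omega)).trans h4
    · apply Subtype.ext
      funext i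
      dsimp only
      rw [X.bar_bar]
      exact fcongr r (j-(j-i.1)) i.1 (by omega) i.2 (by omega)

theorem card_inner (x : X.V) (e : X.E) (he : e ∈ X.edgesAt x) (j : ℕ) :
    Nat.card {q : Fin (j+3) → X.E // X.IsGeodesicLoopAt (X.t e) q ∧
        (q ⟨0, by omega⟩ = X.bar e ∧ q ⟨j+2, by omega⟩ = e)}
      = Nat.card {s : Fin (j+1) → X.E // X.IsGeodesicLoopAt x s ∧
          (s ⟨0, by omega⟩ ≠ e ∧ s ⟨j, by omega⟩ ≠ X.bar e)} := by
  have he' : X.o e = x := he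
  apply Nat.card_congr
  have hmem : ∀ q : Fin (j+3) → X.E,
      (X.IsGeodesicLoopAt (X.t e) q ∧ (q ⟨0, by omega⟩ = X.bar e ∧ q ⟨j+2, by omega⟩ = e)) →
      (X.IsGeodesicLoopAt x (fun i : Fin (j+1) => q ⟨i.1+1, by omega⟩) ∧
        ((fun i : Fin (j+1) => q ⟨i.1+1, by omega⟩) ⟨0, by omega⟩ ≠ e ∧
          (fun i : Fin (j+1) => q ⟨i.1+1, by omega⟩) ⟨j, by omega⟩ ≠ X.bar e)) := by
    rintro q ⟨⟨qpath, qnb, qloop⟩, h0, hl⟩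
    have hl' : ∀ (a : ℕ) (ha : a < j+3), a = j+2 → q ⟨a, ha⟩ = e := by
      intro a ha h; subst h; exact hl
    have h0' : ∀ (a : ℕ) (ha : a < j+3), a = 0 → q ⟨a, ha⟩ = X.bar e := by
      intro a ha h; subst h; exact h0
    refine ⟨⟨?_, ?_, ?_⟩, ?_, ?_⟩
    · intro i h
      exact qpath (i+1) (by omega)
    · intro i h
      exact qnb (i+1) (by omega)
    · intro h
      refine ⟨?_, ?_⟩
      · beta_reduce
        rw [(qpath 0 (by omega)).symm, h0' 0 (by omega) rfl, X.t_bar]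
        exact he'
      · beta_reduce
        rw [qpath (j+1-1+1) (by omega), hl' (j+1-1+1+1) (by omega) (by omega)]
        exact he'
    · intro hc
      apply qnb 0 (by omega)
      beta_reduce at hc
      rw [h0' 0 (by omega) rfl]
      exact hc.trans (X.bar_bar e).symm
    · intro hc
      apply qnb (j+1) (by omega)
      beta_reduce at hc
      rw [hl' (j+1+1) (by omega) (by omega), hc, X.bar_bar]
  refine Equiv.ofBijective
    (fun q => ⟨fun i : Fin (j+1) => q.1 ⟨i.1+1, by omega⟩, hmem q.1 q.2⟩) ⟨?_, ?_⟩
  · rintro ⟨q, hq, h0, hl⟩ ⟨q', hq', h0', hl'⟩ h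
    have hval := congrArg Subtype.val h
    dsimp only at hval
    apply Subtype.ext
    funext i
    dsimp only
    rcases Nat.eq_zero_or_pos i.1 with hz | hpos
    · rw [show i = (⟨0, by omega⟩ : Fin (j+3)) from Fin.ext hz, h0, h0']
    · rcases Nat.lt_or_ge i.1 (j+2) with hlt | hge
      · have h2 := congrFun hval ⟨i.1-1, by omega⟩
        dsimp only at h2
        exact ((fcongr q i.1 (i.1-1+1) i.2 (by omega) (by omega)).trans h2).trans
          (fcongr q' (i.1-1+1) i.1 (by omega) i.2 (by omega))
      · rw [show i = (⟨j+2, by omega⟩ : Fin (j+3)) from Fin.ext (show i.1 = j+2 by omega),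
          hl, hl']
  · rintro ⟨s, ⟨spath, snb, sloop⟩, hs0, hsl⟩
    obtain ⟨hss, hse⟩ := sloop (by omega)
    set q : Fin (j+3) → X.E := fun i =>
      if h0 : i.1 = 0 then X.bar e else if hl : i.1 = j+2 then e
      else s ⟨i.1 - 1, by omega⟩ with hq
    have hq0 : ∀ (a : ℕ) (ha : a < j+3), a = 0 → q ⟨a, ha⟩ = X.bar e := by
      intro a ha h; simp only [hq]; rw [dif_pos h]
    have hql : ∀ (a : ℕ) (ha : a < j+3), a = j+2 → q ⟨a, ha⟩ = e := by
      intro a ha h; simp only [hq]; rw [dif_neg (by omega), dif_pos h]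
    have hqm : ∀ (a : ℕ) (ha : a < j+3) (b : ℕ) (hb : b < j+1), 0 < a → a < j+2 → b = a - 1 →
        q ⟨a, ha⟩ = s ⟨b, hb⟩ := by
      intro a ha b hb h1 h2 h3
      simp only [hq]
      rw [dif_neg (by omega), dif_neg (by omega)]
      exact fcongr s (a-1) b (by omega) hb (by omega)
    have hspath : ∀ (a b : ℕ) (ha : a < j+1) (hb : b < j+1), b = a + 1 →
        X.t (s ⟨a, ha⟩) = X.o (s ⟨b, hb⟩) := by
      intro a b ha hb h; subst h; exact spath a hb
    have hsnb : ∀ (a b : ℕ) (ha : a < j+1) (hb : b < j+1), b = a + 1 →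
        s ⟨b, hb⟩ ≠ X.bar (s ⟨a, ha⟩) := by
      intro a b ha hb h; subst h; exact snb a hb
    refine ⟨⟨q, ⟨?_, ?_, ?_⟩, hq0 0 (by omega) rfl, hql (j+2) (by omega) rfl⟩, ?_⟩
    · intro i h
      rcases Nat.eq_zero_or_pos i with rfl | hpos
      · rw [hq0 0 (by omega) rfl, hqm 1 (by omega) 0 (by omega) (by omega) (by omega) (by omega),
          X.t_bar, he']
        exact hss.symm
      · rcases Nat.lt_or_ge i (j+1) with hlt | hge
        · rw [hqm i (by omega) (i-1) (by omega) (by omega) (by omega) (by omega),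
            hqm (i+1) (by omega) i (by omega) (by omega) (by omega) (by omega)]
          exact hspath (i-1) i (by omega) (by omega) (by omega)
        · have : i = j+1 := by omega
          subst this
          rw [hqm (j+1) (by omega) j (by omega) (by omega) (by omega) (by omega),
            hql (j+1+1) (by omega) (by omega), he']
          exact hse
    · intro i h
      rcases Nat.eq_zero_or_pos i with rfl | hpos
      · rw [hq0 0 (by omega) rfl, hqm 1 (by omega) 0 (by omega) (by omega) (by omega) (by omega),
          X.bar_bar]
        exact hs0
      · rcases Nat.lt_or_ge i (j+1) with hlt | hge
        · rw [hqm i (by omega) (i-1) (by omega) (by omega) (by omega) (by omega),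
            hqm (i+1) (by omega) i (by omega) (by omega) (by omega) (by omega)]
          exact hsnb (i-1) i (by omega) (by omega) (by omega)
        · have : i = j+1 := by omega
          subst this
          rw [hql (j+1+1) (by omega) (by omega),
            hqm (j+1) (by omega) j (by omega) (by omega) (by omega) (by omega)]
          intro hc
          apply hsl
          rw [hc, X.bar_bar]
    · intro h
      refine ⟨?_, ?_⟩
      · rw [hq0 0 (by omega) rfl, X.o_bar']
      · rw [hql (j+3-1) (by omega) (by omega)]
    · apply Subtype.ext
      funext i
      exact hqm (i.1+1) (by omega) i.1 i.2 (by omega) (by omega) (by omega)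

theorem card_first (x : X.V) (j : ℕ) :
    Nat.card {z : X.E × (Fin (j+1) → X.E) // z.1 ∈ X.edgesAt x ∧
        (X.IsGeodesicLoopAt x z.2 ∧ z.2 ⟨0, by omega⟩ = z.1)}
      = Nat.card {s : Fin (j+1) → X.E // X.IsGeodesicLoopAt x s} := by
  apply Nat.card_congr
  refine Equiv.ofBijective (fun z => ⟨z.1.2, z.2.2.1⟩) ⟨?_, ?_⟩
  · rintro ⟨⟨e, s⟩, he, hs, h0⟩ ⟨⟨e', s'⟩, he', hs', h0'⟩ h
    dsimp only at he hs h0 he' hs' h0'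
    obtain rfl : s = s' := congrArg Subtype.val h
    exact Subtype.ext (Prod.ext (h0.symm.trans h0') rfl)
  · rintro ⟨s, hs⟩
    exact ⟨⟨(s ⟨0, by omega⟩, s), (hs.2.2 (by omega)).1, hs, rfl⟩, rfl⟩

theorem card_last (x : X.V) (j : ℕ) :
    Nat.card {z : X.E × (Fin (j+1) → X.E) // z.1 ∈ X.edgesAt x ∧
        (X.IsGeodesicLoopAt x z.2 ∧ z.2 ⟨j, by omega⟩ = X.bar z.1)}
      = Nat.card {s : Fin (j+1) → X.E // X.IsGeodesicLoopAt x s} := by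
  apply Nat.card_congr
  refine Equiv.ofBijective (fun z => ⟨z.1.2, z.2.2.1⟩) ⟨?_, ?_⟩
  · rintro ⟨⟨e, s⟩, he, hs, h0⟩ ⟨⟨e', s'⟩, he', hs', h0'⟩ h
    dsimp only at he hs h0 he' hs' h0'
    obtain rfl : s = s' := congrArg Subtype.val h
    exact Subtype.ext (Prod.ext (X.bar_inj (h0.symm.trans h0')) rfl)
  · rintro ⟨s, hs⟩
    refine ⟨⟨(X.bar (s ⟨j, by omega⟩), s), ?_, hs, (X.bar_bar _).symm⟩, rfl⟩
    show X.o (X.bar (s ⟨j, by omega⟩)) = x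
    rw [X.o_bar']
    exact (hs.2.2 (by omega)).2

theorem card_both (x : X.V) (j : ℕ) :
    Nat.card {z : X.E × (Fin (j+1) → X.E) // z.1 ∈ X.edgesAt x ∧
        (X.IsGeodesicLoopAt x z.2 ∧ (z.2 ⟨0, by omega⟩ = z.1 ∧ z.2 ⟨j, by omega⟩ = X.bar z.1))}
      = Nat.card {p : Fin (j+1) → X.E // X.IsGeodesicLoopAt x p ∧ X.HasTail p} := by
  apply Nat.card_congr
  refine Equiv.ofBijective
    (fun z => ⟨z.1.2, z.2.2.1, by omega, z.2.2.2.2.trans (congrArg X.bar z.2.2.2.1.symm)⟩)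
    ⟨?_, ?_⟩
  · rintro ⟨⟨e, s⟩, he, hs, h0, hl⟩ ⟨⟨e', s'⟩, he', hs', h0', hl'⟩ h
    dsimp only at he hs h0 hl he' hs' h0' hl'
    obtain rfl : s = s' := congrArg Subtype.val h
    exact Subtype.ext (Prod.ext (h0.symm.trans h0') rfl)
  · rintro ⟨p, hp, h0, htail⟩
    refine ⟨⟨(p ⟨0, by omega⟩, p), (hp.2.2 (by omega)).1, hp, rfl, htail⟩, rfl⟩


end SerreGraph

/-- For `m ≥ 5`:
`(N_m − N_{m−2}) − (N_{m−2} − N_{m−4})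
  = (c_m − c_{m−2}) − (deg(x₀)−1)(c_{m−2} − c_{m−4}) + (Δ_X c_{m−2})(x₀)`. -/
theorem N_second_difference (X : SerreGraph) [Countable X.V]
    (hconn : X.Connected)
    (hfin : ∀ x : X.V, (X.edgesAt x).Finite)
    (hbd : ∃ M : ℕ, ∀ x : X.V, X.deg x ≤ M)
    (hdeg1 : ∀ x : X.V, X.deg x ≠ 1)
    (x₀ : X.V) (m : ℕ) (hm : 5 ≤ m) :
    ((X.N m x₀ : ℤ) - X.N (m - 2) x₀) - ((X.N (m - 2) x₀ : ℤ) - X.N (m - 4) x₀) =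
      ((X.c m x₀ : ℤ) - X.c (m - 2) x₀)
        - ((X.deg x₀ : ℤ) - 1) * ((X.c (m - 2) x₀ : ℤ) - X.c (m - 4) x₀)
        + X.lap (fun x => (X.c (m - 2) x : ℤ)) x₀ := by
  classical
  obtain ⟨k, rfl⟩ : ∃ k, m = k + 5 := ⟨m - 5, by omega⟩
  have h2 : k + 5 - 2 = k + 3 := by omega
  have h4 : k + 5 - 4 = k + 1 := by omega
  rw [h2, h4]
  set S : Finset X.E := (hfin x₀).toFinset with hS
  let f1 : X.E → ℕ := fun e => Nat.card {q : Fin (k+3) → X.E //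
    X.IsGeodesicLoopAt (X.t e) q ∧ ((q ⟨0, by omega⟩ = X.bar e) ∧ (q ⟨k+2, by omega⟩ = e))}
  let f2 : X.E → ℕ := fun e => Nat.card {q : Fin (k+3) → X.E //
    X.IsGeodesicLoopAt (X.t e) q ∧ ((q ⟨0, by omega⟩ = X.bar e) ∧ ¬(q ⟨k+2, by omega⟩ = e))}
  let f3 : X.E → ℕ := fun e => Nat.card {q : Fin (k+3) → X.E //
    X.IsGeodesicLoopAt (X.t e) q ∧ (¬(q ⟨0, by omega⟩ = X.bar e) ∧ (q ⟨k+2, by omega⟩ = e))}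
  let f4 : X.E → ℕ := fun e => Nat.card {q : Fin (k+3) → X.E //
    X.IsGeodesicLoopAt (X.t e) q ∧ (¬(q ⟨0, by omega⟩ = X.bar e) ∧ ¬(q ⟨k+2, by omega⟩ = e))}
  let g1 : X.E → ℕ := fun e => Nat.card {s : Fin (k+1) → X.E //
    X.IsGeodesicLoopAt x₀ s ∧ ((s ⟨0, by omega⟩ = e) ∧ (s ⟨k, by omega⟩ = X.bar e))}
  let g2 : X.E → ℕ := fun e => Nat.card {s : Fin (k+1) → X.E //
    X.IsGeodesicLoopAt x₀ s ∧ ((s ⟨0, by omega⟩ = e) ∧ ¬(s ⟨k, by omega⟩ = X.bar e))}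
  let g3 : X.E → ℕ := fun e => Nat.card {s : Fin (k+1) → X.E //
    X.IsGeodesicLoopAt x₀ s ∧ (¬(s ⟨0, by omega⟩ = e) ∧ (s ⟨k, by omega⟩ = X.bar e))}
  let g4 : X.E → ℕ := fun e => Nat.card {s : Fin (k+1) → X.E //
    X.IsGeodesicLoopAt x₀ s ∧ (¬(s ⟨0, by omega⟩ = e) ∧ ¬(s ⟨k, by omega⟩ = X.bar e))}
  let T5 : ℕ := Nat.card {p : Fin (k+5) → X.E // X.IsGeodesicLoopAt x₀ p ∧ X.HasTail p}
  let T1 : ℕ := Nat.card {p : Fin (k+1) → X.E // X.IsGeodesicLoopAt x₀ p ∧ X.HasTail p}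
  have hA8 : ∀ e : X.E, X.c (k+3) (X.t e) = f1 e + f2 e + f3 e + f4 e := by
    intro e
    haveI : Finite {q : Fin (k+3) → X.E // X.IsGeodesicLoopAt (X.t e) q} :=
      X.finite_loops hfin _ (fun q h => h)
    exact SerreGraph.card_part2 (X.IsGeodesicLoopAt (X.t e))
      (fun q => q ⟨0, by omega⟩ = X.bar e) (fun q => q ⟨k+2, by omega⟩ = e)
  have hB : T5 = ∑ e ∈ S, f4 e :=
    (X.card_tailed x₀ (k+2)).trans
      (X.card_pairs x₀ (fun z => X.IsGeodesicLoopAt (X.t z.1) z.2 ∧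
        (z.2 ⟨0, by omega⟩ ≠ X.bar z.1 ∧ z.2 ⟨k+2, by omega⟩ ≠ z.1)) (hfin x₀)
        (fun e => X.finite_loops hfin _ (fun q h => h.1)))
  have hC : ∑ e ∈ S, f3 e = X.N (k+3) x₀ :=
    ((X.card_pairs x₀ (fun z => X.IsGeodesicLoopAt (X.t z.1) z.2 ∧
        (z.2 ⟨0, by omega⟩ ≠ X.bar z.1 ∧ z.2 ⟨k+2, by omega⟩ = z.1)) (hfin x₀)
        (fun e => X.finite_loops hfin _ (fun q h => h.1))).symm).trans (X.card_rot x₀ (k+1))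
  have hD : ∀ e : X.E, f2 e = f3 e := fun e => X.card_rev e (k+2)
  have hE : ∀ e ∈ S, f1 e = g4 e := fun e he =>
    X.card_inner x₀ e ((hfin x₀).mem_toFinset.mp he) k
  have hF : ∀ e : X.E, X.c (k+1) x₀ = g1 e + g2 e + g3 e + g4 e := by
    intro e
    haveI : Finite {s : Fin (k+1) → X.E // X.IsGeodesicLoopAt x₀ s} :=
      X.finite_loops hfin _ (fun q h => h)
    exact SerreGraph.card_part2 (X.IsGeodesicLoopAt x₀)
      (fun s => s ⟨0, by omega⟩ = e) (fun s => s ⟨k, by omega⟩ = X.bar e)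
  have hG : ∑ e ∈ S, g1 e = T1 :=
    ((X.card_pairs x₀ (fun z => X.IsGeodesicLoopAt x₀ z.2 ∧
        (z.2 ⟨0, by omega⟩ = z.1 ∧ z.2 ⟨k, by omega⟩ = X.bar z.1)) (hfin x₀)
        (fun e => X.finite_loops hfin _ (fun q h => h.1))).symm).trans (X.card_both x₀ k)
  have hH1 : ∀ e : X.E, Nat.card {s : Fin (k+1) → X.E //
      X.IsGeodesicLoopAt x₀ s ∧ s ⟨0, by omega⟩ = e} = g1 e + g2 e := by
    intro e
    haveI : Finite {s : Fin (k+1) → X.E //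
        X.IsGeodesicLoopAt x₀ s ∧ s ⟨0, by omega⟩ = e} :=
      X.finite_loops hfin _ (fun q h => h.1)
    exact (SerreGraph.card_split (fun s : Fin (k+1) → X.E =>
        X.IsGeodesicLoopAt x₀ s ∧ s ⟨0, Nat.succ_pos k⟩ = e)
      (fun s => s ⟨k, Nat.lt_succ_self k⟩ = X.bar e)).trans
      (congrArg₂ HAdd.hAdd (SerreGraph.card_reindex _ _ (fun s => by tauto))
        (SerreGraph.card_reindex _ _ (fun s => by tauto)))
  have hH : ∑ e ∈ S, (g1 e + g2 e) = X.c (k+1) x₀ :=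
    calc ∑ e ∈ S, (g1 e + g2 e)
        = ∑ e ∈ S, Nat.card {s : Fin (k+1) → X.E //
            X.IsGeodesicLoopAt x₀ s ∧ s ⟨0, by omega⟩ = e} :=
          Finset.sum_congr rfl (fun e _ => (hH1 e).symm)
      _ = X.c (k+1) x₀ :=
          ((X.card_pairs x₀ (fun z => X.IsGeodesicLoopAt x₀ z.2 ∧
            z.2 ⟨0, by omega⟩ = z.1) (hfin x₀)
            (fun e => X.finite_loops hfin _ (fun q h => h.1))).symm).trans (X.card_first x₀ k)
  have hI1 : ∀ e : X.E, Nat.card {s : Fin (k+1) → X.E //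
      X.IsGeodesicLoopAt x₀ s ∧ s ⟨k, by omega⟩ = X.bar e} = g1 e + g3 e := by
    intro e
    haveI : Finite {s : Fin (k+1) → X.E //
        X.IsGeodesicLoopAt x₀ s ∧ s ⟨k, by omega⟩ = X.bar e} :=
      X.finite_loops hfin _ (fun q h => h.1)
    exact (SerreGraph.card_split (fun s : Fin (k+1) → X.E =>
        X.IsGeodesicLoopAt x₀ s ∧ s ⟨k, Nat.lt_succ_self k⟩ = X.bar e)
      (fun s => s ⟨0, Nat.succ_pos k⟩ = e)).trans
      (congrArg₂ HAdd.hAdd (SerreGraph.card_reindex _ _ (fun s => by tauto))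
        (SerreGraph.card_reindex _ _ (fun s => by tauto)))
  have hI : ∑ e ∈ S, (g1 e + g3 e) = X.c (k+1) x₀ :=
    calc ∑ e ∈ S, (g1 e + g3 e)
        = ∑ e ∈ S, Nat.card {s : Fin (k+1) → X.E //
            X.IsGeodesicLoopAt x₀ s ∧ s ⟨k, by omega⟩ = X.bar e} :=
          Finset.sum_congr rfl (fun e _ => (hI1 e).symm)
      _ = X.c (k+1) x₀ :=
          ((X.card_pairs x₀ (fun z => X.IsGeodesicLoopAt x₀ z.2 ∧
            z.2 ⟨k, by omega⟩ = X.bar z.1) (hfin x₀)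
            (fun e => X.finite_loops hfin _ (fun q h => h.1))).symm).trans (X.card_last x₀ k)
  have h51 : X.c (k+5) x₀ = T5 + X.N (k+5) x₀ := by
    haveI : Finite {p : Fin (k+5) → X.E // X.IsGeodesicLoopAt x₀ p} :=
      X.finite_loops hfin _ (fun q h => h)
    exact SerreGraph.card_split (X.IsGeodesicLoopAt x₀) X.HasTail
  have h11 : X.c (k+1) x₀ = T1 + X.N (k+1) x₀ := by
    haveI : Finite {p : Fin (k+1) → X.E // X.IsGeodesicLoopAt x₀ p} :=
      X.finite_loops hfin _ (fun q h => h)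
    exact SerreGraph.card_split (X.IsGeodesicLoopAt x₀) X.HasTail
  have hdeg : X.deg x₀ = S.card := by
    show Nat.card (X.edgesAt x₀) = S.card
    rw [Nat.card_coe_set_eq, Set.ncard_eq_toFinset_card _ (hfin x₀)]
  have hlap : X.lap (fun x => (X.c (k+3) x : ℤ)) x₀
      = (X.deg x₀ : ℤ) * (X.c (k+3) x₀ : ℤ) - ∑ e ∈ S, (X.c (k+3) (X.t e) : ℤ) := by
    rw [SerreGraph.lap, finsum_mem_eq_finite_toFinset_sum _ (hfin x₀)]
  rw [hlap, hdeg]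
  have zsum : ∑ e ∈ S, (X.c (k+3) (X.t e) : ℤ)
      = (S.card : ℤ) * (X.c (k+1) x₀ : ℤ) - 2 * (X.c (k+1) x₀ : ℤ)
        + (T1 : ℤ) + 2 * (X.N (k+3) x₀ : ℤ) + (T5 : ℤ) := by
    have e1 : ∑ e ∈ S, (X.c (k+3) (X.t e) : ℤ)
        = ∑ e ∈ S, ((f1 e : ℤ) + (f2 e : ℤ) + (f3 e : ℤ) + (f4 e : ℤ)) :=
      Finset.sum_congr rfl (fun e _ => by exact_mod_cast congrArg (Nat.cast (R := ℤ)) (hA8 e))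
    have e2 : ∑ e ∈ S, ((f1 e : ℤ) + (f2 e : ℤ) + (f3 e : ℤ) + (f4 e : ℤ))
        = ∑ e ∈ S, (f1 e : ℤ) + ∑ e ∈ S, (f2 e : ℤ)
          + ∑ e ∈ S, (f3 e : ℤ) + ∑ e ∈ S, (f4 e : ℤ) := by
      rw [← Finset.sum_add_distrib, ← Finset.sum_add_distrib, ← Finset.sum_add_distrib]
    have e3 : ∑ e ∈ S, (f1 e : ℤ) = ∑ e ∈ S, (g4 e : ℤ) :=
      Finset.sum_congr rfl (fun e he => by exact_mod_cast congrArg (Nat.cast (R := ℤ)) (hE e he))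
    have e4 : ∑ e ∈ S, (g4 e : ℤ)
        = ∑ e ∈ S, ((X.c (k+1) x₀ : ℤ) - (g1 e : ℤ) - (g2 e : ℤ) - (g3 e : ℤ)) :=
      Finset.sum_congr rfl (fun e _ => by
        have h := congrArg (Nat.cast (R := ℤ)) (hF e)
        push_cast at h
        linarith)
    have e5 : ∑ e ∈ S, ((X.c (k+1) x₀ : ℤ) - (g1 e : ℤ) - (g2 e : ℤ) - (g3 e : ℤ))
        = (S.card : ℤ) * (X.c (k+1) x₀ : ℤ) - ∑ e ∈ S, (g1 e : ℤ)
          - ∑ e ∈ S, (g2 e : ℤ) - ∑ e ∈ S, (g3 e : ℤ) := by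
      rw [Finset.sum_sub_distrib, Finset.sum_sub_distrib, Finset.sum_sub_distrib,
        Finset.sum_const, nsmul_eq_mul]
    have e6 : ∑ e ∈ S, (g1 e : ℤ) = (T1 : ℤ) := by
      have h := congrArg (Nat.cast (R := ℤ)) hG
      push_cast at h
      exact h
    have e7 : ∑ e ∈ S, (g1 e : ℤ) + ∑ e ∈ S, (g2 e : ℤ) = (X.c (k+1) x₀ : ℤ) := by
      have h := congrArg (Nat.cast (R := ℤ)) hH
      push_cast at h
      rw [← Finset.sum_add_distrib]
      exact h
    have e8 : ∑ e ∈ S, (g1 e : ℤ) + ∑ e ∈ S, (g3 e : ℤ) = (X.c (k+1) x₀ : ℤ) := by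
      have h := congrArg (Nat.cast (R := ℤ)) hI
      push_cast at h
      rw [← Finset.sum_add_distrib]
      exact h
    have e9 : ∑ e ∈ S, (f2 e : ℤ) = ∑ e ∈ S, (f3 e : ℤ) :=
      Finset.sum_congr rfl (fun e _ => by exact_mod_cast congrArg (Nat.cast (R := ℤ)) (hD e))
    have e10 : ∑ e ∈ S, (f3 e : ℤ) = (X.N (k+3) x₀ : ℤ) := by
      have h := congrArg (Nat.cast (R := ℤ)) hC
      push_cast at h
      exact h
    have e11 : ∑ e ∈ S, (f4 e : ℤ) = (T5 : ℤ) := by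
      have h := congrArg (Nat.cast (R := ℤ)) hB
      push_cast at h
      linarith
    linarith
  rw [zsum]
  have z5 : (X.c (k+5) x₀ : ℤ) = (T5 : ℤ) + (X.N (k+5) x₀ : ℤ) := by exact_mod_cast h51
  have z1 : (X.c (k+1) x₀ : ℤ) = (T1 : ℤ) + (X.N (k+1) x₀ : ℤ) := by exact_mod_cast h11
  linear_combination -z5 - z1
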